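/- For every n ≥ 1, the homomorphism ι : Br_n^1 → Br_{n+1} maps the kernel of π¹ bijectively onto the kernel of π; that is, ι restricts to a group isomorphism PB_n^1 ≅ PB_{n+1} between the pure braid group with a frozen strand and the pure braid group on n+1 strands. -/

import Mathlib

/-- The Artin braid relations on `N` generators `β_0, …, β_{N-1}`, recorded as relators:
`β_iβ_{i+1}β_i = β_{i+1}β_iβ_{i+1}` and `β_iβ_j = β_jβ_i` for `|i-j| ≥ 2`. -/
def braidRels (N : ℕ) : Set (FreeGroup (Fin N)) :=
  { r | (∃ i j : Fin N, (i : ℕ) + 1 = (j : ℕ) ∧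
          r = FreeGroup.of i * FreeGroup.of j * FreeGroup.of i *
              (FreeGroup.of j * FreeGroup.of i * FreeGroup.of j)⁻¹) ∨
        (∃ i j : Fin N, (i : ℕ) + 2 ≤ (j : ℕ) ∧
          r = FreeGroup.of i * FreeGroup.of j * (FreeGroup.of j * FreeGroup.of i)⁻¹) }

/-- The braid group on `N+1` strands, presented on the `N` generators `β_0, …, β_{N-1}`
subject to the Artin relations. -/
abbrev Braid (N : ℕ) : Type := PresentedGroup (braidRels N)

/-- Generators of the braid group with a frozen strand `Br^1_{m+1}`:
`X i` (for `i : Fin (m+1)`) is the generator `X_{i+1}`, and `beta i` (for `i : Fin m`) is the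
generator `β_{i+1}` (so the 1-based labels are `X_1, …, X_{m+1}` and `β_1, …, β_m`). -/
inductive FGen (m : ℕ) : Type
  | X : Fin (m + 1) → FGen m
  | beta : Fin m → FGen m

/-- The generator `X_{i+1}` as an element of the free group. -/
def Y {m : ℕ} (i : Fin (m + 1)) : FreeGroup (FGen m) := FreeGroup.of (FGen.X i)

/-- The generator `β_{i+1}` as an element of the free group. -/
def B {m : ℕ} (i : Fin m) : FreeGroup (FGen m) := FreeGroup.of (FGen.beta i)

/-- The defining relators of the braid group with a frozen strand `Br^1_{m+1}`:
the braid relations among the `β`'s together with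
`β_iX_iβ_i⁻¹ = X_{i+1}`, `β_iX_{i+1}β_i⁻¹ = X_{i+1}⁻¹X_iX_{i+1}` and `β_iX_jβ_i⁻¹ = X_j`
for `j ≠ i, i+1`. -/
def frozenRels (m : ℕ) : Set (FreeGroup (FGen m)) :=
  { r | (∃ i j : Fin m, (i : ℕ) + 1 = (j : ℕ) ∧
          r = B i * B j * B i * (B j * B i * B j)⁻¹) ∨
        (∃ i j : Fin m, (i : ℕ) + 2 ≤ (j : ℕ) ∧
          r = B i * B j * (B j * B i)⁻¹) ∨
        (∃ i : Fin m, r = B i * Y i.castSucc * (B i)⁻¹ * (Y i.succ)⁻¹) ∨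
        (∃ i : Fin m,
          r = B i * Y i.succ * (B i)⁻¹ * ((Y i.succ)⁻¹ * Y i.castSucc * Y i.succ)⁻¹) ∨
        (∃ (i : Fin m) (j : Fin (m + 1)), (j : ℕ) ≠ (i : ℕ) ∧ (j : ℕ) ≠ (i : ℕ) + 1 ∧
          r = B i * Y j * (B i)⁻¹ * (Y j)⁻¹) }

/-- The braid group with a frozen strand `Br^1_{m+1}` (so `Br^1_n` with `n = m+1 ≥ 1`). -/
abbrev BrFrozen (m : ℕ) : Type := PresentedGroup (frozenRels m)

/-- The generator `β_k` of the braid group on `m+2` strands (junk value `1` out of range). -/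
def bb (m : ℕ) (k : ℕ) : Braid (m + 1) :=
  if h : k < m + 1 then PresentedGroup.of (⟨k, h⟩ : Fin (m + 1)) else 1

/-- The word `β_k β_{k-1} ⋯ β_1 · β_0² · β_1⁻¹ ⋯ β_k⁻¹` in the braid group on `m+2`
strands; it is the prescribed image of the generator `X_{k+1}`. -/
def Xword (m : ℕ) (k : ℕ) : Braid (m + 1) :=
  (((List.range k).map fun j => bb m (k - j)).prod) * bb m 0 * bb m 0 *
    (((List.range k).map fun j => bb m (k - j)).prod)⁻¹

namespace BFP

open PresentedGroup Equiv

variable {m : ℕ}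

lemma mk_rel {α : Type*} {rels : Set (FreeGroup α)} {r : FreeGroup α} (h : r ∈ rels) :
    PresentedGroup.mk rels r = 1 :=
  (QuotientGroup.eq_one_iff r).2 (Subgroup.subset_normalClosure h)

/-- frozen generator β_{i+1} -/
def b (i : Fin m) : BrFrozen m := PresentedGroup.of (FGen.beta i)

/-- frozen generator X_{i+1} -/
def y (i : Fin (m + 1)) : BrFrozen m := PresentedGroup.of (FGen.X i)

lemma braid1 (i j : Fin (m + 1)) (h : (i : ℕ) + 1 = j) :
    (of i : Braid (m + 1)) * of j * of i = of j * of i * of j := by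
  have h1 := mk_rel (rels := braidRels (m + 1)) (Or.inl ⟨i, j, h, rfl⟩)
  simp only [map_mul, map_inv, mul_inv_eq_one] at h1
  exact h1

lemma braid2 (i j : Fin (m + 1)) (h : (i : ℕ) + 2 ≤ j) :
    (of i : Braid (m + 1)) * of j = of j * of i := by
  have h1 := mk_rel (rels := braidRels (m + 1)) (Or.inr ⟨i, j, h, rfl⟩)
  simp only [map_mul, map_inv, mul_inv_eq_one] at h1
  exact h1

lemma frozen1 (i j : Fin m) (h : (i : ℕ) + 1 = j) :
    b i * b j * b i = b j * b i * (b j : BrFrozen m) := by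
  have h1 := mk_rel (rels := frozenRels m) (Or.inl ⟨i, j, h, rfl⟩)
  simp only [B, map_mul, map_inv, mul_inv_eq_one] at h1
  exact h1

lemma frozen2 (i j : Fin m) (h : (i : ℕ) + 2 ≤ j) :
    b i * b j = b j * (b i : BrFrozen m) := by
  have h1 := mk_rel (rels := frozenRels m) (Or.inr (Or.inl ⟨i, j, h, rfl⟩))
  simp only [B, map_mul, map_inv, mul_inv_eq_one] at h1
  exact h1

lemma frozen3 (i : Fin m) : b i * y i.castSucc * (b i)⁻¹ = (y i.succ : BrFrozen m) := by
  have h1 := mk_rel (rels := frozenRels m) (Or.inr (Or.inr (Or.inl ⟨i, rfl⟩)))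
  simp only [B, Y, map_mul, map_inv, mul_inv_eq_one] at h1
  exact h1

lemma frozen4 (i : Fin m) :
    b i * y i.succ * (b i)⁻¹ = ((y i.succ)⁻¹ * y i.castSucc * y i.succ : BrFrozen m) := by
  have h1 := mk_rel (rels := frozenRels m) (Or.inr (Or.inr (Or.inr (Or.inl ⟨i, rfl⟩))))
  simp only [B, Y, map_mul, map_inv, mul_inv_eq_one] at h1
  exact h1

lemma frozen5 (i : Fin m) (j : Fin (m + 1)) (h1 : (j : ℕ) ≠ i) (h2 : (j : ℕ) ≠ (i : ℕ) + 1) :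
    b i * y j * (b i)⁻¹ = (y j : BrFrozen m) := by
  have hh := mk_rel (rels := frozenRels m) (Or.inr (Or.inr (Or.inr (Or.inr ⟨i, j, h1, h2, rfl⟩))))
  simp only [B, Y, map_mul, map_inv, mul_inv_eq_one] at hh
  exact hh



lemma swap_left {i : Fin (m + 1)} {k : Fin (m + 2)} (h : (k : ℕ) = i) :
    Equiv.swap i.castSucc i.succ k = i.succ := by
  have hk : k = i.castSucc := Fin.ext (by simpa using h)
  rw [hk, Equiv.swap_apply_left]

lemma swap_right {i : Fin (m + 1)} {k : Fin (m + 2)} (h : (k : ℕ) = (i : ℕ) + 1) :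
    Equiv.swap i.castSucc i.succ k = i.castSucc := by
  have hk : k = i.succ := Fin.ext (by simpa using h)
  rw [hk, Equiv.swap_apply_right]

lemma swap_other {i : Fin (m + 1)} {k : Fin (m + 2)} (h1 : (k : ℕ) ≠ i)
    (h2 : (k : ℕ) ≠ (i : ℕ) + 1) :
    Equiv.swap i.castSucc i.succ k = k :=
  Equiv.swap_apply_of_ne_of_ne (fun hc => h1 (by rw [hc]; simp))
    (fun hc => h2 (by rw [hc]; simp))

/-- The cocycle value for generator `β_i` at position `k`. -/
def cF (m : ℕ) (i : Fin (m + 1)) (k : Fin (m + 2)) : BrFrozen m :=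
  if h1 : (k : ℕ) < i then b ⟨(i : ℕ) - 1, by have := i.isLt; omega⟩
  else if h2 : (k : ℕ) = i then 1
  else if h3 : (k : ℕ) = (i : ℕ) + 1 then y i
  else b ⟨(i : ℕ), by have := k.isLt; omega⟩

lemma cF_lt {i : Fin (m + 1)} {k : Fin (m + 2)} (h : (k : ℕ) < i) {t : ℕ}
    (ht : t + 1 = (i : ℕ)) (htm : t < m) : cF m i k = b ⟨t, htm⟩ := by
  rw [cF, dif_pos h]
  congr 1
  exact Fin.ext (by simp; omega)

lemma cF_eq {i : Fin (m + 1)} {k : Fin (m + 2)} (h : (k : ℕ) = i) : cF m i k = 1 := by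
  rw [cF, dif_neg (by omega), dif_pos h]

lemma cF_succ {i : Fin (m + 1)} {k : Fin (m + 2)} (h : (k : ℕ) = (i : ℕ) + 1) :
    cF m i k = y i := by
  rw [cF, dif_neg (by omega), dif_neg (by omega), dif_pos h]

lemma cF_gt {i : Fin (m + 1)} {k : Fin (m + 2)} (h : (i : ℕ) + 1 < k) (htm : (i : ℕ) < m) :
    cF m i k = b ⟨(i : ℕ), htm⟩ := by
  rw [cF, dif_neg (by omega), dif_neg (by omega), dif_neg (by omega)]

/-- The action of the generator `β_i` on `Fin (m+2) × BrFrozen m`. -/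
def act (m : ℕ) (i : Fin (m + 1)) : Equiv.Perm (Fin (m + 2) × BrFrozen m) where
  toFun p := (Equiv.swap i.castSucc i.succ p.1, cF m i p.1 * p.2)
  invFun p := (Equiv.swap i.castSucc i.succ p.1,
    (cF m i (Equiv.swap i.castSucc i.succ p.1))⁻¹ * p.2)
  left_inv p := by simp [mul_assoc]
  right_inv p := by simp [mul_assoc]

lemma act_apply (i : Fin (m + 1)) (p : Fin (m + 2) × BrFrozen m) :
    act m i p = (Equiv.swap i.castSucc i.succ p.1, cF m i p.1 * p.2) := rfl



lemma byb (t : Fin m) : b t * y t.castSucc = y t.succ * b t := by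
  have h3 := frozen3 t
  rw [mul_inv_eq_iff_eq_mul] at h3
  exact h3

lemma yyb (t : Fin m) : y t.castSucc * y t.succ * b t = b t * y t.castSucc * y t.succ := by
  have h3 := frozen3 t
  have h4 := frozen4 t
  have key : b t * y t.castSucc * y t.succ
      = (b t * y t.castSucc * (b t)⁻¹) * (b t * y t.succ * (b t)⁻¹) * b t := by group
  rw [h3, h4] at key
  rw [key]; group

lemma yb_comm (t : Fin m) (jj : Fin (m + 1)) (h1 : (jj : ℕ) ≠ t)
    (h2 : (jj : ℕ) ≠ (t : ℕ) + 1) : y jj * b t = b t * y jj := by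
  have h5 := frozen5 t jj h1 h2
  rw [mul_inv_eq_iff_eq_mul] at h5
  exact h5.symm

lemma y_congr {i i' : Fin (m + 1)} (h : (i : ℕ) = (i' : ℕ)) : (y i : BrFrozen m) = y i' :=
  congrArg y (Fin.ext h)

lemma act_braid (i j : Fin (m + 1)) (hij : (i : ℕ) + 1 = j) :
    act m i * act m j * act m i = act m j * act m i * act m j := by
  have him := i.isLt
  have hjm := j.isLt
  apply Equiv.ext
  rintro ⟨k, h⟩
  have hkm := k.isLt
  have pa : (i : ℕ) < m := by omega
  set t : Fin m := ⟨(i : ℕ), pa⟩ with ht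
  have hic : ((i.castSucc : Fin (m + 2)) : ℕ) = (i : ℕ) := by simp
  have his : ((i.succ : Fin (m + 2)) : ℕ) = (i : ℕ) + 1 := by simp
  have hjc : ((j.castSucc : Fin (m + 2)) : ℕ) = (j : ℕ) := by simp
  have hjs : ((j.succ : Fin (m + 2)) : ℕ) = (j : ℕ) + 1 := by simp
  simp only [Equiv.Perm.mul_apply, act_apply]
  rcases Nat.lt_trichotomy ((k : ℕ)) ((i : ℕ)) with hk | hk | hk
  · -- k < i
    have p1 : (i : ℕ) - 1 < m := by omega
    have e1 : Equiv.swap i.castSucc i.succ k = k := swap_other (by omega) (by omega)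
    have e2 : Equiv.swap j.castSucc j.succ k = k := swap_other (by omega) (by omega)
    rw [e1, e2, e1, e2]
    rw [cF_lt hk (t := (i : ℕ) - 1) (by omega) p1, cF_lt (i := j) (by omega) (t := (i : ℕ)) (by omega) pa]
    rw [Prod.mk.injEq]
    refine ⟨rfl, ?_⟩
    simp only [← mul_assoc]
    rw [frozen1 ⟨(i : ℕ) - 1, p1⟩ t (by simp [ht]; omega)]
  · -- k = i
    have e1 : Equiv.swap i.castSucc i.succ k = i.succ := swap_left hk
    have e2 : Equiv.swap j.castSucc j.succ k = k := swap_other (by omega) (by omega)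
    have e3 : Equiv.swap j.castSucc j.succ (i.succ : Fin (m + 2)) = j.succ :=
      swap_left (by omega)
    have e4 : Equiv.swap i.castSucc i.succ (j.succ : Fin (m + 2)) = j.succ :=
      swap_other (by omega) (by omega)
    rw [e1, e2, e1, e3, e4]
    rw [cF_gt (i := i) (k := j.succ) (by omega) pa, cF_eq (i := j) (k := i.succ) (by omega),
      cF_eq hk, cF_lt (i := j) (k := k) (by omega) (t := (i : ℕ)) (by omega) pa]
    rw [Prod.mk.injEq]
    refine ⟨rfl, ?_⟩
    simp only [one_mul]
  · rcases Nat.lt_trichotomy ((k : ℕ)) ((i : ℕ) + 2) with hk2 | hk2 | hk2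
    · -- k = i + 1
      have hk1 : (k : ℕ) = (i : ℕ) + 1 := by omega
      have e1 : Equiv.swap i.castSucc i.succ k = i.castSucc := swap_right hk1
      have e2 : Equiv.swap j.castSucc j.succ k = j.succ := swap_left (by omega)
      have e3 : Equiv.swap j.castSucc j.succ (i.castSucc : Fin (m + 2)) = i.castSucc :=
        swap_other (by omega) (by omega)
      have e4 : Equiv.swap i.castSucc i.succ (i.castSucc : Fin (m + 2)) = i.succ :=
        swap_left (by omega)
      have e5 : Equiv.swap i.castSucc i.succ (j.succ : Fin (m + 2)) = j.succ :=
        swap_other (by omega) (by omega)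
      have e6 : Equiv.swap j.castSucc j.succ (j.succ : Fin (m + 2)) = j.castSucc :=
        swap_right (by omega)
      rw [e1, e2, e3, e4, e5, e6]
      rw [cF_eq (i := i) (k := i.castSucc) (by omega),
        cF_lt (i := j) (k := i.castSucc) (by omega) (t := (i : ℕ)) (by omega) pa,
        cF_succ (i := i) (k := k) hk1,
        cF_succ (i := j) (k := j.succ) (by omega),
        cF_gt (i := i) (k := j.succ) (by omega) pa,
        cF_eq (i := j) (k := k) (by omega)]
      rw [Prod.mk.injEq]
      refine ⟨Fin.ext (by omega), ?_⟩
      rw [y_congr (i := i) (i' := t.castSucc) (by simp [ht]),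
        y_congr (i := j) (i' := t.succ) (by simp [ht]; omega)]
      simp only [one_mul, ← mul_assoc]
      rw [byb t]
    · -- k = i + 2
      have e1 : Equiv.swap i.castSucc i.succ k = k := swap_other (by omega) (by omega)
      have e2 : Equiv.swap j.castSucc j.succ k = j.castSucc := swap_right (by omega)
      have e3 : Equiv.swap i.castSucc i.succ (j.castSucc : Fin (m + 2)) = i.castSucc :=
        swap_right (by omega)
      have e4 : Equiv.swap j.castSucc j.succ (i.castSucc : Fin (m + 2)) = i.castSucc :=
        swap_other (by omega) (by omega)
      rw [e1, e2, e3, e4]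
      rw [cF_succ (i := i) (k := j.castSucc) (by omega),
        cF_succ (i := j) (k := k) (by omega),
        cF_gt (i := i) (k := k) (by omega) pa,
        cF_lt (i := j) (k := i.castSucc) (by omega) (t := (i : ℕ)) (by omega) pa]
      rw [Prod.mk.injEq]
      refine ⟨rfl, ?_⟩
      rw [y_congr (i := i) (i' := t.castSucc) (by simp [ht]),
        y_congr (i := j) (i' := t.succ) (by simp [ht]; omega)]
      simp only [← mul_assoc]
      rw [yyb t]
    · -- k > i + 2
      have pj : (j : ℕ) < m := by omega
      have e1 : Equiv.swap i.castSucc i.succ k = k := swap_other (by omega) (by omega)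
      have e2 : Equiv.swap j.castSucc j.succ k = k := swap_other (by omega) (by omega)
      rw [e1, e2, e1, e2]
      rw [cF_gt (i := i) (k := k) (by omega) pa, cF_gt (i := j) (k := k) (by omega) pj]
      rw [Prod.mk.injEq]
      refine ⟨rfl, ?_⟩
      simp only [← mul_assoc]
      rw [frozen1 t ⟨(j : ℕ), pj⟩ (by simp [ht]; omega)]

lemma act_comm (i j : Fin (m + 1)) (hij : (i : ℕ) + 2 ≤ j) :
    act m i * act m j = act m j * act m i := by
  have him := i.isLt
  have hjm := j.isLt
  apply Equiv.ext
  rintro ⟨k, h⟩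
  have hkm := k.isLt
  have hic : ((i.castSucc : Fin (m + 2)) : ℕ) = (i : ℕ) := by simp
  have his : ((i.succ : Fin (m + 2)) : ℕ) = (i : ℕ) + 1 := by simp
  have hjc : ((j.castSucc : Fin (m + 2)) : ℕ) = (j : ℕ) := by simp
  have hjs : ((j.succ : Fin (m + 2)) : ℕ) = (j : ℕ) + 1 := by simp
  have pj1 : (j : ℕ) - 1 < m := by omega
  set tj : Fin m := ⟨(j : ℕ) - 1, pj1⟩ with htj
  simp only [Equiv.Perm.mul_apply, act_apply]
  rcases Nat.lt_trichotomy ((k : ℕ)) ((i : ℕ)) with hk | hk | hk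
  · -- k < i
    have p1 : (i : ℕ) - 1 < m := by omega
    have e1 : Equiv.swap i.castSucc i.succ k = k := swap_other (by omega) (by omega)
    have e2 : Equiv.swap j.castSucc j.succ k = k := swap_other (by omega) (by omega)
    rw [e1, e2, e1]
    rw [cF_lt hk (t := (i : ℕ) - 1) (by omega) p1,
      cF_lt (i := j) (by omega) (t := (j : ℕ) - 1) (by omega) pj1]
    rw [Prod.mk.injEq]
    refine ⟨rfl, ?_⟩
    simp only [← mul_assoc]
    rw [frozen2 ⟨(i : ℕ) - 1, p1⟩ tj (by simp [htj]; omega)]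
  · -- k = i
    have e1 : Equiv.swap i.castSucc i.succ k = i.succ := swap_left hk
    have e2 : Equiv.swap j.castSucc j.succ k = k := swap_other (by omega) (by omega)
    have e3 : Equiv.swap j.castSucc j.succ (i.succ : Fin (m + 2)) = i.succ :=
      swap_other (by omega) (by omega)
    rw [e1, e2, e1, e3]
    rw [cF_eq hk, cF_lt (i := j) (k := k) (by omega) (t := (j : ℕ) - 1) (by omega) pj1,
      cF_lt (i := j) (k := i.succ) (by omega) (t := (j : ℕ) - 1) (by omega) pj1]
    rw [Prod.mk.injEq]
    refine ⟨rfl, ?_⟩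
    simp only [one_mul]
  · rcases Nat.lt_trichotomy ((k : ℕ)) ((j : ℕ)) with hk2 | hk2 | hk2
    rcases Nat.eq_or_lt_of_le (show (i : ℕ) + 1 ≤ k by omega) with hk1 | hk1
    · -- k = i + 1
      have e1 : Equiv.swap i.castSucc i.succ k = i.castSucc := swap_right hk1.symm
      have e2 : Equiv.swap j.castSucc j.succ k = k := swap_other (by omega) (by omega)
      have e3 : Equiv.swap j.castSucc j.succ (i.castSucc : Fin (m + 2)) = i.castSucc :=
        swap_other (by omega) (by omega)
      rw [e1, e2, e1, e3]
      rw [cF_succ (i := i) (k := k) hk1.symm,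
        cF_lt (i := j) (k := k) (by omega) (t := (j : ℕ) - 1) (by omega) pj1,
        cF_lt (i := j) (k := i.castSucc) (by omega) (t := (j : ℕ) - 1) (by omega) pj1]
      rw [Prod.mk.injEq]
      refine ⟨rfl, ?_⟩
      simp only [← mul_assoc]
      rw [yb_comm tj i (by simp [htj]; omega) (by simp [htj]; omega)]
    · -- i + 1 < k < j
      have pa : (i : ℕ) < m := by omega
      have e1 : Equiv.swap i.castSucc i.succ k = k := swap_other (by omega) (by omega)
      have e2 : Equiv.swap j.castSucc j.succ k = k := swap_other (by omega) (by omega)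
      rw [e1, e2, e1]
      rw [cF_gt (i := i) (k := k) (by omega) pa,
        cF_lt (i := j) (k := k) (by omega) (t := (j : ℕ) - 1) (by omega) pj1]
      rw [Prod.mk.injEq]
      refine ⟨rfl, ?_⟩
      simp only [← mul_assoc]
      rw [frozen2 ⟨(i : ℕ), pa⟩ tj (by simp [htj]; omega)]
    · -- k = j
      have pa : (i : ℕ) < m := by omega
      have e1 : Equiv.swap i.castSucc i.succ k = k := swap_other (by omega) (by omega)
      have e2 : Equiv.swap j.castSucc j.succ k = j.succ := swap_left hk2
      have e3 : Equiv.swap i.castSucc i.succ (j.succ : Fin (m + 2)) = j.succ :=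
        swap_other (by omega) (by omega)
      rw [e1, e2, e3]
      rw [cF_eq (i := j) (k := k) hk2, cF_gt (i := i) (k := j.succ) (by omega) pa,
        cF_gt (i := i) (k := k) (by omega) pa]
      rw [Prod.mk.injEq]
      refine ⟨rfl, ?_⟩
      simp only [one_mul]
    rcases Nat.eq_or_lt_of_le (show (j : ℕ) + 1 ≤ k by omega) with hk1 | hk1
    · -- k = j + 1
      have pa : (i : ℕ) < m := by omega
      have e1 : Equiv.swap i.castSucc i.succ k = k := swap_other (by omega) (by omega)
      have e2 : Equiv.swap j.castSucc j.succ k = j.castSucc := swap_right hk1.symm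
      have e3 : Equiv.swap i.castSucc i.succ (j.castSucc : Fin (m + 2)) = j.castSucc :=
        swap_other (by omega) (by omega)
      rw [e1, e2, e3]
      rw [cF_succ (i := j) (k := k) hk1.symm, cF_gt (i := i) (k := j.castSucc) (by omega) pa,
        cF_gt (i := i) (k := k) (by omega) pa]
      rw [Prod.mk.injEq]
      refine ⟨rfl, ?_⟩
      simp only [← mul_assoc]
      rw [yb_comm ⟨(i : ℕ), pa⟩ j (by simp; omega) (by simp; omega)]
    · -- k > j + 1
      have pa : (i : ℕ) < m := by omega
      have pc : (j : ℕ) < m := by omega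
      have e1 : Equiv.swap i.castSucc i.succ k = k := swap_other (by omega) (by omega)
      have e2 : Equiv.swap j.castSucc j.succ k = k := swap_other (by omega) (by omega)
      rw [e1, e2, e1]
      rw [cF_gt (i := i) (k := k) (by omega) pa, cF_gt (i := j) (k := k) (by omega) pc]
      rw [Prod.mk.injEq]
      refine ⟨rfl, ?_⟩
      simp only [← mul_assoc]
      rw [frozen2 ⟨(i : ℕ), pa⟩ ⟨(j : ℕ), pc⟩ (by simp; omega)]

lemma act_rels : ∀ r ∈ braidRels (m + 1), FreeGroup.lift (act m) r = 1 := by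
  rintro r (⟨i, j, hij, rfl⟩ | ⟨i, j, hij, rfl⟩)
  · simp only [map_mul, map_inv, FreeGroup.lift_apply_of, mul_inv_eq_one]
    exact act_braid i j hij
  · simp only [map_mul, map_inv, FreeGroup.lift_apply_of, mul_inv_eq_one]
    exact act_comm i j hij

/-- The action of the braid group on `Fin (m+2) × BrFrozen m`. -/
def Phi (m : ℕ) : Braid (m + 1) →* Equiv.Perm (Fin (m + 2) × BrFrozen m) :=
  PresentedGroup.toGroup act_rels

lemma Phi_of (i : Fin (m + 1)) : Phi m (of i) = act m i :=
  PresentedGroup.toGroup.of act_rels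

/-- The cocycle. -/
def Fc (m : ℕ) (g : Braid (m + 1)) (k : Fin (m + 2)) : BrFrozen m :=
  (Phi m g (k, 1)).2

/-- The transversal word `tr m k = β_{k-1} ⋯ β_1 β_0`. -/
def tr (m : ℕ) : ℕ → Braid (m + 1)
  | 0 => 1
  | k + 1 => bb m k * tr m k

lemma tr_succ (k : ℕ) : tr m (k + 1) = bb m k * tr m k := rfl

lemma bb_eq (k : ℕ) (h : k < m + 1) : bb m k = of (⟨k, h⟩ : Fin (m + 1)) := dif_pos h

lemma bb_coe (i : Fin (m + 1)) : bb m (i : ℕ) = of i := by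
  rw [bb_eq _ i.isLt]

lemma tr_comm (j : Fin (m + 1)) : ∀ k : ℕ, k < (j : ℕ) → of j * tr m k = tr m k * of j := by
  intro k
  induction k with
  | zero => intro _; simp [tr]
  | succ k ih =>
    intro h
    have hk : k < m + 1 := by have := j.isLt; omega
    rw [tr_succ, bb_eq k hk]
    have e := braid2 ⟨k, hk⟩ j (by simp; omega)
    calc of j * (of ⟨k, hk⟩ * tr m k) = (of j * of ⟨k, hk⟩) * tr m k := by group
      _ = (of ⟨k, hk⟩ * of j) * tr m k := by rw [← e]
      _ = of ⟨k, hk⟩ * (of j * tr m k) := by group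
      _ = of ⟨k, hk⟩ * (tr m k * of j) := by rw [ih (by omega)]
      _ = of ⟨k, hk⟩ * tr m k * of j := by group

lemma Xword_succ (k : ℕ) : Xword m (k + 1) = bb m (k + 1) * Xword m k * (bb m (k + 1))⁻¹ := by
  have hl : ((List.range (k + 1)).map fun j => bb m (k + 1 - j))
      = bb m (k + 1) :: ((List.range k).map fun j => bb m (k - j)) := by
    rw [List.range_succ_eq_map]
    simp [List.map_map, Function.comp_def, Nat.succ_sub_succ]
  rw [Xword, Xword, hl, List.prod_cons]
  group

lemma sq_tr : ∀ i : ℕ, i < m + 1 → bb m i * bb m i * tr m i = tr m i * Xword m i := by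
  intro i
  induction i with
  | zero =>
    intro _
    have e0 : Xword m 0 = bb m 0 * bb m 0 := by simp [Xword]
    show bb m 0 * bb m 0 * tr m 0 = tr m 0 * Xword m 0
    rw [e0]
    show bb m 0 * bb m 0 * 1 = 1 * (bb m 0 * bb m 0)
    group
  | succ i ih =>
    intro h
    have hi : i < m + 1 := by omega
    have IH := ih hi
    have hb : bb m i * bb m (i + 1) * bb m i = bb m (i + 1) * bb m i * bb m (i + 1) := by
      rw [bb_eq i hi, bb_eq (i + 1) h]
      exact braid1 _ _ (by simp)
    have tcz : bb m (i + 1) * tr m i = tr m i * bb m (i + 1) := by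
      rw [bb_eq (i + 1) h]
      exact tr_comm _ i (by simp)
    have ctcz : Commute (bb m (i + 1)) (tr m i) := tcz
    have e : bb m (i+1) * bb m (i+1) * bb m i * bb m (i+1)
        = bb m i * bb m (i+1) * bb m i * bb m i := by
      calc bb m (i+1) * bb m (i+1) * bb m i * bb m (i+1)
          = bb m (i+1) * (bb m (i+1) * bb m i * bb m (i+1)) := by group
        _ = bb m (i+1) * (bb m i * bb m (i+1) * bb m i) := by rw [← hb]
        _ = (bb m (i+1) * bb m i * bb m (i+1)) * bb m i := by group
        _ = (bb m i * bb m (i+1) * bb m i) * bb m i := by rw [← hb]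
        _ = bb m i * bb m (i+1) * bb m i * bb m i := by group
    have e' : bb m i * bb m (i+1) * bb m i * bb m i * (bb m (i+1))⁻¹
        = bb m (i+1) * bb m (i+1) * bb m i :=
      mul_inv_eq_iff_eq_mul.mpr e.symm
    rw [tr_succ]
    calc bb m (i+1) * bb m (i+1) * (bb m i * tr m i)
        = bb m (i+1) * bb m (i+1) * bb m i * tr m i := by group
      _ = bb m i * bb m (i+1) * bb m i * bb m i * (bb m (i+1))⁻¹ * tr m i := by rw [e']
      _ = bb m i * bb m (i+1) * ((bb m i * bb m i * tr m i) * (bb m (i+1))⁻¹) := by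
            rw [mul_assoc (bb m i * bb m (i+1) * bb m i * bb m i) ((bb m (i+1))⁻¹) (tr m i),
              ctcz.inv_left.eq]
            group
      _ = bb m i * bb m (i+1) * ((tr m i * Xword m i) * (bb m (i+1))⁻¹) := by rw [IH]
      _ = bb m i * (bb m (i+1) * tr m i) * (Xword m i * (bb m (i+1))⁻¹) := by group
      _ = bb m i * (tr m i * bb m (i+1)) * (Xword m i * (bb m (i+1))⁻¹) := by rw [tcz]
      _ = (bb m i * tr m i) * (bb m (i+1) * Xword m i * (bb m (i+1))⁻¹) := by group
      _ = (bb m i * tr m i) * Xword m (i + 1) := by rw [Xword_succ]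

lemma tr_gt (i : Fin (m + 1)) : ∀ k : ℕ, (i : ℕ) + 2 ≤ k → k ≤ m + 1 →
    of i * tr m k = tr m k * bb m ((i : ℕ) + 1) := by
  intro k
  induction k with
  | zero => intro h _; omega
  | succ k ih =>
    intro h1 h2
    rcases Nat.lt_or_ge ((i : ℕ) + 2) (k + 1) with hlt | hge
    · have e1 : of i * tr m k = tr m k * bb m ((i : ℕ) + 1) := ih (by omega) (by omega)
      have hk : k < m + 1 := by omega
      rw [tr_succ]
      have e2 : of i * bb m k = bb m k * of i := by
        rw [bb_eq k hk]
        exact braid2 i ⟨k, hk⟩ (by simp; omega)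
      calc of i * (bb m k * tr m k) = (of i * bb m k) * tr m k := by group
        _ = bb m k * (of i * tr m k) := by rw [e2, mul_assoc]
        _ = bb m k * (tr m k * bb m ((i : ℕ) + 1)) := by rw [e1]
        _ = bb m k * tr m k * bb m ((i : ℕ) + 1) := by group
    · have hk : k = (i : ℕ) + 1 := by omega
      subst hk
      have hi : (i : ℕ) < m + 1 := i.isLt
      have h1m : (i : ℕ) + 1 < m + 1 := by omega
      rw [tr_succ, tr_succ]
      have hb : bb m (i : ℕ) * bb m ((i : ℕ) + 1) * bb m (i : ℕ)
          = bb m ((i : ℕ) + 1) * bb m (i : ℕ) * bb m ((i : ℕ) + 1) := by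
        rw [bb_eq _ hi, bb_eq _ h1m]
        exact braid1 _ _ (by simp)
      have tcz : bb m ((i : ℕ) + 1) * tr m (i : ℕ) = tr m (i : ℕ) * bb m ((i : ℕ) + 1) := by
        rw [bb_eq _ h1m]
        exact tr_comm _ _ (by simp)
      rw [← bb_coe i]
      calc bb m (i : ℕ) * (bb m ((i : ℕ) + 1) * (bb m (i : ℕ) * tr m (i : ℕ)))
          = (bb m (i : ℕ) * bb m ((i : ℕ) + 1) * bb m (i : ℕ)) * tr m (i : ℕ) := by group
        _ = (bb m ((i : ℕ) + 1) * bb m (i : ℕ) * bb m ((i : ℕ) + 1)) * tr m (i : ℕ) := by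
            rw [hb]
        _ = bb m ((i : ℕ) + 1) * bb m (i : ℕ) * (bb m ((i : ℕ) + 1) * tr m (i : ℕ)) := by group
        _ = bb m ((i : ℕ) + 1) * bb m (i : ℕ) * (tr m (i : ℕ) * bb m ((i : ℕ) + 1)) := by
            rw [tcz]
        _ = bb m ((i : ℕ) + 1) * (bb m (i : ℕ) * tr m (i : ℕ)) * bb m ((i : ℕ) + 1) := by group

section WithPi

variable (π : Braid (m + 1) →* Equiv.Perm (Fin (m + 2)))
  (hπ : ∀ i : Fin (m + 1), π (PresentedGroup.of i) = Equiv.swap i.castSucc i.succ)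

lemma Fc_one (k : Fin (m + 2)) : Fc m 1 k = 1 := by
  simp [Fc, map_one]

lemma Fc_of (i : Fin (m + 1)) (k : Fin (m + 2)) : Fc m (of i) k = cF m i k := by
  have e : Fc m (of i) k = (Phi m (of i) (k, 1)).2 := rfl
  rw [e, Phi_of, act_apply, mul_one]

include hπ

/-- The subgroup of elements on which `Phi` acts in cocycle form. -/
def goodSet : Subgroup (Braid (m + 1)) where
  carrier := {g | ∀ p : Fin (m + 2) × BrFrozen m, Phi m g p = (π g p.1, Fc m g p.1 * p.2)}
  one_mem' := by
    rintro ⟨k, h⟩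
    simp [Fc, map_one]
  mul_mem' := by
    intro g g' hg hg' p
    obtain ⟨k, h⟩ := p
    have e : ∀ h : BrFrozen m, Phi m (g * g') (k, h)
        = ((π g) ((π g') k), Fc m g ((π g') k) * (Fc m g' k * h)) := by
      intro h
      rw [map_mul, Equiv.Perm.mul_apply, hg' (k, h)]
      exact hg ((π g') k, Fc m g' k * h)
    have e1 := e 1
    rw [e h]
    show _ = ((π (g * g')) k, Fc m (g * g') k * h)
    rw [map_mul, Equiv.Perm.mul_apply]
    have e2 : Fc m (g * g') k = Fc m g ((π g') k) * (Fc m g' k * 1) := by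
      have : Fc m (g * g') k = (Phi m (g * g') (k, 1)).2 := rfl
      rw [this, e1]
    rw [e2]
    simp [mul_assoc]
  inv_mem' := by
    intro g hg
    have key : ∀ (k : Fin (m + 2)) (h : BrFrozen m),
        Phi m g⁻¹ (k, h) = ((π g)⁻¹ k, (Fc m g ((π g)⁻¹ k))⁻¹ * h) := by
      intro k h
      have e : Phi m g (((π g)⁻¹ k), (Fc m g ((π g)⁻¹ k))⁻¹ * h) = (k, h) := by
        rw [hg (((π g)⁻¹ k), (Fc m g ((π g)⁻¹ k))⁻¹ * h)]
        simp
      calc Phi m g⁻¹ (k, h)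
          = Phi m g⁻¹ (Phi m g (((π g)⁻¹ k), (Fc m g ((π g)⁻¹ k))⁻¹ * h)) := by rw [e]
        _ = (Phi m g⁻¹ * Phi m g) (((π g)⁻¹ k), (Fc m g ((π g)⁻¹ k))⁻¹ * h) := rfl
        _ = _ := by rw [← map_mul, inv_mul_cancel, map_one]; rfl
    rintro ⟨k, h⟩
    rw [key k h]
    show _ = ((π g⁻¹) k, Fc m g⁻¹ k * h)
    rw [map_inv]
    have e2 : Fc m g⁻¹ k = (Fc m g ((π g)⁻¹ k))⁻¹ * 1 := by
      have : Fc m g⁻¹ k = (Phi m g⁻¹ (k, 1)).2 := rfl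
      rw [this, key k 1]
    rw [e2, mul_one]
  
lemma of_mem_goodSet (i : Fin (m + 1)) : PresentedGroup.of i ∈ goodSet π := by
  rintro ⟨k, h⟩
  rw [Phi_of, act_apply, hπ i]
  show _ = (_, Fc m (of i) k * h)
  have : Fc m (of i) k = cF m i k * 1 := by
    have e : Fc m (of i) k = (Phi m (of i) (k, 1)).2 := rfl
    rw [e, Phi_of, act_apply]
  rw [this, mul_one]

lemma Phi_apply (g : Braid (m + 1)) (p : Fin (m + 2) × BrFrozen m) :
    Phi m g p = (π g p.1, Fc m g p.1 * p.2) :=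
  PresentedGroup.generated_by _ (goodSet π) (fun j => of_mem_goodSet π hπ j) g p

lemma Fc_mul (g g' : Braid (m + 1)) (k : Fin (m + 2)) :
    Fc m (g * g') k = Fc m g ((π g') k) * Fc m g' k := by
  have e : Fc m (g * g') k = (Phi m (g * g') (k, 1)).2 := rfl
  rw [e, map_mul, Equiv.Perm.mul_apply, Phi_apply π hπ g' (k, 1), mul_one,
    Phi_apply π hπ g ((π g') k, Fc m g' k)]

lemma Fc_inv (g : Braid (m + 1)) (k : Fin (m + 2)) :
    Fc m g⁻¹ k = (Fc m g ((π g)⁻¹ k))⁻¹ := by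
  have e := Fc_mul π hπ g g⁻¹ k
  rw [mul_inv_cancel, Fc_one, map_inv] at e
  exact (inv_eq_of_mul_eq_one_right e.symm).symm

/-- `π` kills every `Xword`. -/
lemma pi_Xword : ∀ k : ℕ, π (Xword m k) = 1 := by
  intro k
  induction k with
  | zero =>
    have e0 : Xword m 0 = bb m 0 * bb m 0 := by simp [Xword]
    rw [e0, map_mul, bb_eq 0 (Nat.succ_pos m), hπ]
    exact Equiv.swap_mul_self _ _
  | succ k ih =>
    rw [Xword_succ, map_mul, map_mul, map_inv, ih, mul_one, mul_inv_cancel]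

end WithPi

section WithAll

variable (ι : BrFrozen m →* Braid (m + 1))
  (hιβ : ∀ i : Fin m,
      ι (PresentedGroup.of (FGen.beta i)) = PresentedGroup.of (i.succ : Fin (m + 1)))
  (hιX : ∀ k : Fin (m + 1), ι (PresentedGroup.of (FGen.X k)) = Xword m (k : ℕ))
  (π : Braid (m + 1) →* Equiv.Perm (Fin (m + 2)))
  (hπ : ∀ i : Fin (m + 1), π (PresentedGroup.of i) = Equiv.swap i.castSucc i.succ)

include hιβ in
lemma iota_b (t : Fin m) : ι (b t) = bb m ((t : ℕ) + 1) := by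
  rw [bb_eq _ (by have := t.isLt; omega)]
  have e : ι (b t) = of t.succ := hιβ t
  rw [e]
  exact congrArg PresentedGroup.of (Fin.ext (by simp))

/-- The subgroup on which the Schreier rewriting identity holds. -/
def keySet : Subgroup (Braid (m + 1)) where
  carrier := {g | ∀ k : Fin (m + 2),
    g * tr m (k : ℕ) = tr m (((π g) k : Fin (m + 2)) : ℕ) * ι (Fc m g k)}
  one_mem' := by
    intro k
    simp [Fc_one, map_one]
  mul_mem' := by
    intro g g' hg hg' k
    have e := Fc_mul π hπ g g' k
    calc g * g' * tr m (k : ℕ) = g * (g' * tr m (k : ℕ)) := by group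
      _ = g * (tr m (((π g') k : Fin (m + 2)) : ℕ) * ι (Fc m g' k)) := by rw [hg' k]
      _ = (g * tr m (((π g') k : Fin (m + 2)) : ℕ)) * ι (Fc m g' k) := by group
      _ = tr m (((π g) ((π g') k) : Fin (m + 2)) : ℕ) * ι (Fc m g ((π g') k))
            * ι (Fc m g' k) := by rw [hg ((π g') k)]
      _ = tr m (((π (g * g')) k : Fin (m + 2)) : ℕ) * ι (Fc m (g * g') k) := by
            simp only [e, map_mul, Equiv.Perm.mul_apply, mul_assoc]
  inv_mem' := by
    intro g hg k
    have e := hg (((π g)⁻¹) k)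
    rw [← Equiv.Perm.mul_apply, mul_inv_cancel, Equiv.Perm.one_apply] at e
    have target : g⁻¹ * tr m (k : ℕ)
        = tr m ((((π g)⁻¹ k) : Fin (m + 2)) : ℕ) * (ι (Fc m g ((π g)⁻¹ k)))⁻¹ := by
      rw [show tr m (k : ℕ)
          = g * tr m ((((π g)⁻¹ k) : Fin (m + 2)) : ℕ) * (ι (Fc m g ((π g)⁻¹ k)))⁻¹ from by
        rw [e]; group]
      group
    simp only [map_inv, Fc_inv π hπ]
    exact target

include hιβ hιX in
lemma of_mem_keySet (i : Fin (m + 1)) : PresentedGroup.of i ∈ keySet ι π hπ := by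
  intro k
  rw [hπ i, Fc_of]
  rcases Nat.lt_trichotomy ((k : ℕ)) ((i : ℕ)) with hk | hk | hk
  · have p1 : (i : ℕ) - 1 < m := by have := i.isLt; omega
    rw [swap_other (by omega) (by omega), cF_lt hk (t := (i : ℕ) - 1) (by omega) p1,
      iota_b ι hιβ ⟨(i : ℕ) - 1, p1⟩,
      show (((⟨(i : ℕ) - 1, p1⟩ : Fin m) : ℕ)) + 1 = (i : ℕ) by simp; omega, bb_coe i]
    exact tr_comm i k hk
  · rw [swap_left hk, cF_eq hk, map_one, mul_one, hk,
      show ((i.succ : Fin (m + 2)) : ℕ) = (i : ℕ) + 1 by simp, tr_succ, bb_coe i]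
  · rcases Nat.lt_or_ge ((k : ℕ)) ((i : ℕ) + 2) with hk2 | hk2
    · have hk1 : (k : ℕ) = (i : ℕ) + 1 := by omega
      have hyx : ι (y i) = Xword m (i : ℕ) := hιX i
      rw [swap_right hk1, cF_succ hk1, hyx, hk1,
        show ((i.castSucc : Fin (m + 2)) : ℕ) = (i : ℕ) by simp, tr_succ, ← mul_assoc,
        ← bb_coe i]
      exact sq_tr (i : ℕ) i.isLt
    · have pa : (i : ℕ) < m := by have := k.isLt; omega
      rw [swap_other (by omega) (by omega), cF_gt (by omega) pa, iota_b ι hιβ ⟨(i : ℕ), pa⟩]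
      exact tr_gt i k hk2 (by have := k.isLt; omega)

include hιβ hιX hπ in
lemma key (g : Braid (m + 1)) (k : Fin (m + 2)) :
    g * tr m (k : ℕ) = tr m (((π g) k : Fin (m + 2)) : ℕ) * ι (Fc m g k) :=
  PresentedGroup.generated_by _ (keySet ι π hπ)
    (fun j => of_mem_keySet ι hιβ hιX π hπ j) g k

include hπ in
lemma Fc_Xword : ∀ k : ℕ, ∀ h : k < m + 1, Fc m (Xword m k) (0 : Fin (m + 2)) = y ⟨k, h⟩ := by
  intro k
  induction k with
  | zero =>
    intro h
    have e0 : Xword m 0 = bb m 0 * bb m 0 := by simp [Xword]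
    have hb0 : bb m 0 = of (⟨0, Nat.succ_pos m⟩ : Fin (m + 1)) := bb_eq 0 (Nat.succ_pos m)
    have hsw : (π (bb m 0)) (0 : Fin (m + 2)) = (⟨0, Nat.succ_pos m⟩ : Fin (m + 1)).succ := by
      rw [hb0, hπ]
      exact swap_left (by simp)
    rw [e0, Fc_mul π hπ, hsw, hb0, Fc_of, Fc_of, cF_succ (by simp), cF_eq (by simp), mul_one]
  | succ k ih =>
    intro h
    have hk : k < m + 1 := by omega
    have pk : k < m := by omega
    have hz : bb m (k + 1) = of (⟨k + 1, h⟩ : Fin (m + 1)) := bb_eq _ h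
    have hfix : (π (bb m (k + 1))) (0 : Fin (m + 2)) = 0 := by
      rw [hz, hπ]
      exact swap_other (by simp) (by simp)
    have hfixinv : (π (bb m (k + 1)))⁻¹ (0 : Fin (m + 2)) = 0 := by
      conv_lhs => rw [← hfix]
      exact Equiv.symm_apply_apply _ _
    have hXfix : (π (Xword m k)) (0 : Fin (m + 2)) = 0 := by
      rw [pi_Xword π hπ]
      rfl
    have hFz : Fc m (bb m (k + 1)) (0 : Fin (m + 2)) = b ⟨k, pk⟩ := by
      rw [hz, Fc_of]
      exact cF_lt (by simp) (by simp) pk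
    rw [Xword_succ, Fc_mul π hπ, map_inv, hfixinv, Fc_mul π hπ, hXfix, hFz,
      Fc_inv π hπ, hfixinv, hFz, ih hk]
    rw [y_congr (i := (⟨k, hk⟩ : Fin (m + 1))) (i' := (⟨k, pk⟩ : Fin m).castSucc) (by simp),
      frozen3]
    exact congrArg y (Fin.ext (by simp))

end WithAll

/-- Extension of a permutation of `{1,…,m+1}` to `{0,1,…,m+1}`. -/
noncomputable def E (m : ℕ) : Equiv.Perm (Fin (m + 1)) →* Equiv.Perm (Fin (m + 2)) :=
  Equiv.Perm.viaEmbeddingHom (Fin.succEmb (m + 1))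

lemma E_swap (a c : Fin (m + 1)) :
    E m (Equiv.swap a c) = Equiv.swap a.succ c.succ := by
  apply Equiv.ext
  intro x
  rw [E, Equiv.Perm.viaEmbeddingHom_apply]
  rcases Fin.eq_zero_or_eq_succ x with rfl | ⟨j, rfl⟩
  · rw [Equiv.Perm.viaEmbedding_apply_of_notMem]
    · rw [Equiv.swap_apply_of_ne_of_ne (Fin.succ_ne_zero a).symm (Fin.succ_ne_zero c).symm]
    · rintro ⟨w, hw⟩
      exact Fin.succ_ne_zero w hw
  · have e1 : (Equiv.swap a c).viaEmbedding (Fin.succEmb (m + 1)) (Fin.succEmb (m + 1) j)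
        = Fin.succEmb (m + 1) (Equiv.swap a c j) :=
      Equiv.Perm.viaEmbedding_apply _ _ j
    have e2 : Fin.succEmb (m + 1) j = j.succ := rfl
    have e3 : ∀ w : Fin (m + 1), Fin.succEmb (m + 1) w = w.succ := fun _ => rfl
    rw [e3] at e1
    rw [e1, e3]
    exact ((Fin.succ_injective (m + 1)).swap_apply a c j).symm

lemma E_injective : Function.Injective (E m) :=
  Equiv.Perm.viaEmbeddingHom_injective (Fin.succEmb (m + 1))

section Retract

variable (ι : BrFrozen m →* Braid (m + 1))
  (hιβ : ∀ i : Fin m,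
      ι (PresentedGroup.of (FGen.beta i)) = PresentedGroup.of (i.succ : Fin (m + 1)))
  (hιX : ∀ k : Fin (m + 1), ι (PresentedGroup.of (FGen.X k)) = Xword m (k : ℕ))
  (π : Braid (m + 1) →* Equiv.Perm (Fin (m + 2)))
  (hπ : ∀ i : Fin (m + 1), π (PresentedGroup.of i) = Equiv.swap i.castSucc i.succ)

/-- The subgroup of `BrFrozen m` on which `Fc ∘ ι` is the identity. -/
def QSet : Subgroup (BrFrozen m) where
  carrier := {a | (π (ι a)) (0 : Fin (m + 2)) = 0 ∧ Fc m (ι a) (0 : Fin (m + 2)) = a}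
  one_mem' := by
    constructor
    · rw [map_one, map_one]
      rfl
    · rw [map_one, Fc_one]
  mul_mem' := by
    rintro a c ⟨ha1, ha2⟩ ⟨hc1, hc2⟩
    constructor
    · rw [map_mul, map_mul, Equiv.Perm.mul_apply, hc1, ha1]
    · rw [map_mul, Fc_mul π hπ, hc1, ha2, hc2]
  inv_mem' := by
    rintro a ⟨ha1, ha2⟩
    have hinv : (π (ι a))⁻¹ (0 : Fin (m + 2)) = 0 := by
      conv_lhs => rw [← ha1]
      exact Equiv.symm_apply_apply _ _
    constructor
    · rw [map_inv, map_inv, hinv]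
    · rw [map_inv, Fc_inv π hπ, hinv, ha2]

include hιβ hιX hπ in
lemma retract (a : BrFrozen m) :
    (π (ι a)) (0 : Fin (m + 2)) = 0 ∧ Fc m (ι a) (0 : Fin (m + 2)) = a := by
  refine PresentedGroup.generated_by _ (QSet ι π hπ) ?_ a
  rintro (t | t)
  · have h1 : ι (PresentedGroup.of (FGen.X t)) = Xword m (t : ℕ) := hιX t
    constructor
    · rw [h1, pi_Xword π hπ]
      rfl
    · rw [h1, Fc_Xword π hπ (t : ℕ) t.isLt]
      exact congrArg y (Fin.ext rfl)
  · have h1 : ι (PresentedGroup.of (FGen.beta t)) = PresentedGroup.of t.succ := hιβ t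
    constructor
    · rw [h1, hπ]
      exact swap_other (by simp) (by simp)
    · rw [h1, Fc_of, cF_lt (by simp) (t := (t : ℕ)) (by simp) t.isLt]
      exact congrArg b (Fin.ext rfl)

end Retract

end BFP

/-- For every `n ≥ 1` (here `n = m+1`): the homomorphism `ι : Br_n^1 → Br_{n+1}`
(determined by `ι(β_i) = β_i` and `ι(X_i) = β_{i-1}⋯β_1·β_0²·β_1⁻¹⋯β_{i-1}⁻¹`)
maps the kernel of `π¹` bijectively onto the kernel of `π`, where `π : Br_{n+1} → Sym({0,…,n})`
sends `β_i` to the transposition `(i, i+1)` and `π¹ : Br_n^1 → Sym({1,…,n})` sends each `X_i`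
to the identity and `β_i` to `(i, i+1)`.  That is, `ι` restricts to a group isomorphism
`PB_n^1 ≅ PB_{n+1}`. -/
theorem frozen_pure_iso_pure (m : ℕ)
    (ι : BrFrozen m →* Braid (m + 1))
    (hιβ : ∀ i : Fin m,
      ι (PresentedGroup.of (FGen.beta i)) = PresentedGroup.of (i.succ : Fin (m + 1)))
    (hιX : ∀ k : Fin (m + 1), ι (PresentedGroup.of (FGen.X k)) = Xword m (k : ℕ))
    (π : Braid (m + 1) →* Equiv.Perm (Fin (m + 2)))
    (hπ : ∀ i : Fin (m + 1),
      π (PresentedGroup.of i) = Equiv.swap i.castSucc i.succ)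
    (π₁ : BrFrozen m →* Equiv.Perm (Fin (m + 1)))
    (hπ₁X : ∀ k : Fin (m + 1), π₁ (PresentedGroup.of (FGen.X k)) = 1)
    (hπ₁β : ∀ i : Fin m,
      π₁ (PresentedGroup.of (FGen.beta i)) = Equiv.swap i.castSucc i.succ) :
    Set.BijOn ι (π₁.ker : Set (BrFrozen m)) (π.ker : Set (Braid (m + 1))) := by
  classical
  have hcomp : ∀ g : BrFrozen m, π (ι g) = BFP.E m (π₁ g) := by
    have hext : π.comp ι = (BFP.E m).comp π₁ := by
      apply PresentedGroup.ext
      rintro (t | t)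
      · show π (ι (PresentedGroup.of (FGen.X t))) = BFP.E m (π₁ (PresentedGroup.of (FGen.X t)))
        rw [hιX t, BFP.pi_Xword π hπ, hπ₁X t, map_one]
      · show π (ι (PresentedGroup.of (FGen.beta t)))
            = BFP.E m (π₁ (PresentedGroup.of (FGen.beta t)))
        rw [hιβ t, hπ, hπ₁β t, BFP.E_swap,
          show ((t.succ : Fin (m + 1)).castSucc : Fin (m + 2)) = (t.castSucc : Fin (m + 1)).succ
            from Fin.ext (by simp)]
    intro g
    exact DFunLike.congr_fun hext g
  refine ⟨?_, ?_, ?_⟩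
  · intro g hg
    have hg1 : π₁ g = 1 := hg
    show π (ι g) = 1
    rw [hcomp g, hg1, map_one]
  · intro g1 _ g2 _ heq
    have e1 := (BFP.retract ι hιβ hιX π hπ g1).2
    have e2 := (BFP.retract ι hιβ hιX π hπ g2).2
    rw [← e1, ← e2, heq]
  · intro g hg
    have hg1 : π g = 1 := hg
    have hkey := BFP.key ι hιβ hιX π hπ g (0 : Fin (m + 2))
    rw [hg1] at hkey
    have h1 : (((1 : Equiv.Perm (Fin (m + 2))) (0 : Fin (m + 2)) : Fin (m + 2)) : ℕ) = 0 := rfl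
    rw [h1] at hkey
    have h0 : ((0 : Fin (m + 2)) : ℕ) = 0 := rfl
    rw [h0] at hkey
    have htr : BFP.tr m 0 = 1 := rfl
    rw [htr, mul_one, one_mul] at hkey
    refine ⟨BFP.Fc m g 0, ?_, hkey.symm⟩
    show π₁ (BFP.Fc m g 0) = 1
    apply BFP.E_injective
    rw [← hcomp, ← hkey, hg1, map_one]
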